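/- Let p be a prime, β an element of multiplicative order p in GF(2^r), and B = [β^{ij}]_{0≤i<m, 0≤j<n} with 1 ≤ m ≤ n ≤ p. Then for every t with 1 ≤ t ≤ p−1, the t-th Hadamard power B^{∘t} = [β^{ijt}] has rank m, while B^{∘0} (the all-ones matrix) has rank 1. -/

import Mathlib

set_option maxHeartbeats 1000000 in
/-- All Hadamard powers `B^{∘t}`, `1 ≤ t ≤ p-1`, of the m×n Vandermonde base
matrix `[β^{ij}]` (β of prime order p, m ≤ n ≤ p) have rank m, while the
0-th Hadamard power (all-ones matrix) has rank 1. -/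
theorem stmt11 {r p m n : ℕ} (hp : p.Prime)
    {F : Type*} [Field F] [Fintype F] [CharP F 2] (hF : Fintype.card F = 2 ^ r)
    (β : F) (hβ : orderOf β = p)
    (hm : 1 ≤ m) (hmn : m ≤ n) (hnp : n ≤ p) :
    (∀ t : ℕ, 1 ≤ t → t ≤ p - 1 →
      (Matrix.of fun (i : Fin m) (j : Fin n) => β ^ ((i : ℕ) * (j : ℕ) * t)).rank = m) ∧
    (Matrix.of fun (_ : Fin m) (_ : Fin n) => (1 : F)).rank = 1 := by
  have hppos : 0 < p := hp.pos
  have hβ0 : β ≠ 0 := by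
    intro h
    have h2 := pow_orderOf_eq_one β
    rw [hβ, h, zero_pow hppos.ne'] at h2
    exact zero_ne_one h2
  constructor
  · intro t ht1 ht2
    have htp : ¬ p ∣ t := by
      intro hdvd
      have := Nat.le_of_dvd (by omega) hdvd
      omega
    set M : Matrix (Fin m) (Fin n) F :=
      Matrix.of fun (i : Fin m) (j : Fin n) => β ^ ((i : ℕ) * (j : ℕ) * t) with hM
    have hinj : Function.Injective (fun j : Fin m => β ^ ((j : ℕ) * t)) := by
      have key : ∀ a b : Fin m, (a : ℕ) ≤ (b : ℕ) →
          β ^ ((a : ℕ) * t) = β ^ ((b : ℕ) * t) → a = b := by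
        intro a b hle hab
        have h1 : β ^ ((a : ℕ) * t) * β ^ ((b : ℕ) * t - (a : ℕ) * t)
            = β ^ ((a : ℕ) * t) * 1 := by
          rw [← pow_add, mul_one,
            Nat.add_sub_cancel' (Nat.mul_le_mul_right t hle)]
          exact hab.symm
        have h2 : β ^ ((b : ℕ) * t - (a : ℕ) * t) = 1 :=
          mul_left_cancel₀ (pow_ne_zero _ hβ0) h1
        have h3 : p ∣ (b : ℕ) * t - (a : ℕ) * t := by
          rw [← hβ]; exact orderOf_dvd_of_pow_eq_one h2
        have h4 : (b : ℕ) * t - (a : ℕ) * t = ((b : ℕ) - (a : ℕ)) * t := by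
          rw [Nat.sub_mul]
        rw [h4] at h3
        rcases (Nat.Prime.dvd_mul hp).mp h3 with h5 | h5
        · have hba : (b : ℕ) - (a : ℕ) < p := by
            have := b.isLt; omega
          have : (b : ℕ) - (a : ℕ) = 0 := by
            rcases Nat.eq_zero_of_dvd_of_lt h5 hba |>.symm with h
            omega
          exact Fin.ext (by omega)
        · exact absurd h5 htp
      intro a b hab
      rcases le_total (a : ℕ) (b : ℕ) with h | h
      · exact key a b h hab
      · exact (key b a h hab.symm).symm
    have hdet : (Matrix.vandermonde fun j : Fin m => β ^ ((j : ℕ) * t)).det ≠ 0 :=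
      Matrix.det_vandermonde_ne_zero_iff.mpr hinj
    set E : Matrix (Fin n) (Fin m) F :=
      Matrix.of fun (a : Fin n) (j : Fin m) => if a = Fin.castLE hmn j then (1 : F) else 0
      with hE
    have hsub : (Matrix.vandermonde fun i : Fin m => β ^ ((i : ℕ) * t)) = M * E := by
      ext i j
      rw [Matrix.mul_apply]
      simp only [hM, hE, Matrix.of_apply, Matrix.vandermonde_apply, mul_ite, mul_one, mul_zero]
      rw [Finset.sum_ite_eq' Finset.univ (Fin.castLE hmn j) (fun a => β ^ ((i:ℕ) * (a:ℕ) * t))]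
      simp only [Finset.mem_univ, if_true, Fin.coe_castLE]
      rw [← pow_mul]
      ring_nf
    have hrank1 : (Matrix.vandermonde fun i : Fin m => β ^ ((i : ℕ) * t)).rank = m := by
      rw [Matrix.rank_of_isUnit _ ((Matrix.isUnit_iff_isUnit_det _).mpr
        (isUnit_iff_ne_zero.mpr hdet)), Fintype.card_fin]
    have hle1 : m ≤ M.rank := by
      have h := Matrix.rank_mul_le_left M E
      rw [← hsub, hrank1] at h
      exact h
    have hle2 : M.rank ≤ m := by
      simpa using M.rank_le_card_height
    omega
  · have hm' : (0 : ℕ) < m := hm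
    have hn' : (0 : ℕ) < n := lt_of_lt_of_le hm' hmn
    haveI : NeZero m := ⟨hm'.ne'⟩
    haveI : NeZero n := ⟨hn'.ne'⟩
    set J : Matrix (Fin m) (Fin n) F := Matrix.of fun _ _ => (1 : F) with hJ
    have hfact : J = (Matrix.of fun (_ : Fin m) (_ : Fin 1) => (1 : F)) *
        (Matrix.of fun (_ : Fin 1) (_ : Fin n) => (1 : F)) := by
      ext i j
      simp [Matrix.mul_apply, hJ]
    have hle : J.rank ≤ 1 := by
      rw [hfact]
      calc ((Matrix.of fun (_ : Fin m) (_ : Fin 1) => (1 : F)) *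
          (Matrix.of fun (_ : Fin 1) (_ : Fin n) => (1 : F))).rank
          ≤ (Matrix.of fun (_ : Fin m) (_ : Fin 1) => (1 : F)).rank :=
            Matrix.rank_mul_le_left _ _
        _ ≤ Fintype.card (Fin 1) := Matrix.rank_le_card_width _
        _ = 1 := by simp
    set R0 : Matrix (Fin 1) (Fin m) F :=
      Matrix.of fun _ i => if i = (⟨0, hm'⟩ : Fin m) then (1 : F) else 0 with hR0
    set C0 : Matrix (Fin n) (Fin 1) F :=
      Matrix.of fun j _ => if j = (⟨0, hn'⟩ : Fin n) then (1 : F) else 0 with hC0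
    have hprod : R0 * (J * C0) = (1 : Matrix (Fin 1) (Fin 1) F) := by
      ext i j
      fin_cases i
      fin_cases j
      simp [Matrix.mul_apply, hJ, hR0, hC0, Finset.sum_ite_eq', Matrix.one_apply, -Fin.mk_zero']
    have hgr : 1 ≤ J.rank := by
      have h1 : (1 : Matrix (Fin 1) (Fin 1) F).rank = 1 := by
        rw [Matrix.rank_one, Fintype.card_fin]
      have h2 := Matrix.rank_mul_le_right R0 (J * C0)
      have h3 := Matrix.rank_mul_le_left J C0
      rw [hprod, h1] at h2
      omega
    omega
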